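/- Let J = (f₁,…,f_t) ⊆ I be ideals in a commutative ring R with J ∩ Iⁿ = J·Iⁿ⁻¹ for all n ≥ 1, and set J_{t−1} = (f₁,…,f_{t−1}). Then for all n ≥ 1, J_{t−1} ∩ Iⁿ ⊆ J_{t−1}·Iⁿ⁻¹ + f_t·((J_{t−1} : f_t) ∩ Iⁿ⁻¹). -/

import Mathlib

/-- Key containment: `J_{t−1} ∩ Iⁿ ⊆ J_{t−1}·Iⁿ⁻¹ + f_t·((J_{t−1} : f_t) ∩ Iⁿ⁻¹)`. -/
theorem truncation_inter_pow_le {R : Type*} [CommRing R] {t : ℕ} (ht : 1 ≤ t)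
    (f : Fin t → R) (J I : Ideal R) (hJ : J = Ideal.span (Set.range f)) (hJI : J ≤ I)
    (hatf : ∀ n : ℕ, 1 ≤ n → J ⊓ I ^ n = J * I ^ (n - 1))
    (Jt1 : Ideal R) (hJt1 : Jt1 = Ideal.span (f '' {i : Fin t | (i : ℕ) < t - 1})) :
    ∀ n : ℕ, 1 ≤ n →
      Jt1 ⊓ I ^ n ≤
        Jt1 * I ^ (n - 1) +
          Ideal.span {f ⟨t - 1, by omega⟩} *
            (Submodule.colon Jt1 (Ideal.span {f ⟨t - 1, by omega⟩}) ⊓ I ^ (n - 1)) := by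
  intro n hn
  set g : R := f ⟨t - 1, by omega⟩ with hg
  have hset : Set.range f = f '' {i : Fin t | (i : ℕ) < t - 1} ∪ {g} := by
    ext x
    simp only [Set.mem_range, Set.mem_union, Set.mem_image, Set.mem_singleton_iff,
      Set.mem_setOf_eq]
    constructor
    · rintro ⟨i, rfl⟩
      by_cases h : (i : ℕ) < t - 1
      · exact Or.inl ⟨i, h, rfl⟩
      · right
        have hi : (i : ℕ) = t - 1 := by omega
        have : i = ⟨t - 1, by omega⟩ := Fin.ext (by simp [hi])
        rw [this]
    · rintro (⟨i, _, rfl⟩ | rfl) <;> exact ⟨_, rfl⟩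
  have hsplit : J = Jt1 ⊔ Ideal.span {g} := by
    rw [hJ, hJt1, hset, Ideal.span_union]
  rintro x ⟨hx1, hx2⟩
  have hxJ : x ∈ J * I ^ (n - 1) := by
    rw [← hatf n hn]
    exact ⟨hsplit ▸ Submodule.mem_sup_left hx1, hx2⟩
  rw [hsplit, Ideal.sup_mul] at hxJ
  obtain ⟨a, ha, b, hb, hab⟩ := Submodule.mem_sup.mp hxJ
  obtain ⟨c, hc, hgc⟩ := Ideal.mem_span_singleton_mul.mp hb
  have haJ : a ∈ Jt1 := Ideal.mul_le_left ha
  have hgcJ : g * c ∈ Jt1 := by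
    have heq : g * c = x - a := by rw [hgc]; rw [← hab]; ring
    rw [heq]
    exact Ideal.sub_mem _ hx1 haJ
  have hcol : c ∈ Submodule.colon Jt1 (Ideal.span {g}) := by
    rw [Submodule.mem_colon]
    rintro p hp
    obtain ⟨r, rfl⟩ := Ideal.mem_span_singleton'.mp hp
    have : c • (r * g) = r * (g * c) := by simp [smul_eq_mul]; ring
    rw [this]
    exact Ideal.mul_mem_left _ _ hgcJ
  refine Submodule.mem_sup.mpr ⟨a, ha, g * c, ?_, by rw [hgc]; exact hab⟩
  exact Ideal.mem_span_singleton_mul.mpr ⟨c, ⟨hcol, hc⟩, rfl⟩
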